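/- Fix positive integers $I,J,K,L,N$, parameters $U \in \mathbb{R}^{K\times I}$, $V \in \mathbb{R}^{L\times J}$, $B \in \mathbb{R}^{I\times J}$, $C \in \mathbb{R}^{K\times L}$, training data $X_1,\dots,X_N \in \{0,1\}^{I\times J}$, the energy $E(X,Y) = -\mathrm{tr}(U^T Y V X^T) - \mathrm{tr}(X^T B) - \mathrm{tr}(Y^T C)$, and the log-likelihood $\ell = \frac{1}{N}\sum_{n=1}^N \log\big(\sum_{Y} e^{-E(X_n,Y)}\big) - \log\big(\sum_{X',Y'} e^{-E(X',Y')}\big)$ viewed as a function of the weight entry $v_{l_0 j_0}$. Then, with $\sigma$ applied entrywise and $p(X) = \sum_{Y} e^{-E(X,Y)} / \sum_{X',Y'} e^{-E(X',Y')}$, $\frac{\partial \ell}{\partial v_{l_0 j_0}} = \frac{1}{N}\sum_{n=1}^N \big(\sigma(U X_n V^T + C)^T\, U\, X_n\big)_{l_0 j_0} - \sum_{X \in \{0,1\}^{I\times J}} p(X) \big(\sigma(U X V^T + C)^T\, U\, X\big)_{l_0 j_0}$, where $\sigma(x)=1/(1+e^{-x})$. -/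

import Mathlib

open Matrix Finset Real

noncomputable section

/-- Interpret a Boolean matrix as a real 0/1 matrix. -/
def toR {m n : Type*} (b : Matrix m n Bool) : Matrix m n ℝ :=
  Matrix.of fun i j => if b i j then (1 : ℝ) else 0

/-- The sigmoid function `σ(x) = 1/(1+e^{-x})`. -/
def sig (x : ℝ) : ℝ := 1 / (1 + Real.exp (-x))

/-- Entrywise sigmoid of a matrix. -/
def sigM {m n : Type*} (M : Matrix m n ℝ) : Matrix m n ℝ :=
  Matrix.of fun i j => sig (M i j)

/-- The MVRBM energy `E(X,Y;Θ) = -tr(Uᵀ Y V Xᵀ) - tr(Xᵀ B) - tr(Yᵀ C)`. -/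
def mvrbmEnergy {I J K L : ℕ} (U : Matrix (Fin K) (Fin I) ℝ) (V : Matrix (Fin L) (Fin J) ℝ)
    (B : Matrix (Fin I) (Fin J) ℝ) (C : Matrix (Fin K) (Fin L) ℝ)
    (X : Matrix (Fin I) (Fin J) ℝ) (Y : Matrix (Fin K) (Fin L) ℝ) : ℝ :=
  -(Uᵀ * Y * V * Xᵀ).trace - (Xᵀ * B).trace - (Yᵀ * C).trace

/-- the derivative of the log-likelihood with respect to the weight entry
`v_{l₀j₀}` equals
`(1/N) ∑_n (σ(U Xₙ Vᵀ + C)ᵀ U Xₙ)_{l₀j₀} - ∑_X p(X) (σ(U X Vᵀ + C)ᵀ U X)_{l₀j₀}`. -/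
lemma sum_split_single {ι : Type*} [Fintype ι] [DecidableEq ι] (i₀ : ι) (f : ι → ℝ) :
    ∑ i, f i = f i₀ + ∑ i, if i = i₀ then 0 else f i := by
  have h : ∀ i ∈ Finset.univ, f i = (if i = i₀ then f i else 0) + (if i = i₀ then 0 else f i) := by
    intro i _; by_cases h : i = i₀ <;> simp [h]
  rw [Finset.sum_congr rfl h, Finset.sum_add_distrib]
  simp

lemma trace_transpose_mul' {m n : Type*} [Fintype m] [Fintype n]
    (A B : Matrix m n ℝ) : (Aᵀ * B).trace = ∑ i, ∑ j, A i j * B i j := by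
  rw [Finset.sum_comm]
  simp [Matrix.trace, Matrix.diag, Matrix.mul_apply, Matrix.transpose_apply]

lemma negEnergy_eq {I J K L : ℕ} (U : Matrix (Fin K) (Fin I) ℝ) (V' : Matrix (Fin L) (Fin J) ℝ)
    (B : Matrix (Fin I) (Fin J) ℝ) (C : Matrix (Fin K) (Fin L) ℝ)
    (X : Matrix (Fin I) (Fin J) ℝ) (Y : Matrix (Fin K) (Fin L) ℝ) :
    -(mvrbmEnergy U V' B C X Y)
      = (Xᵀ * B).trace + ∑ k, ∑ l, Y k l * (U * X * V'ᵀ + C) k l := by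
  have h1 : (Uᵀ * Y * V' * Xᵀ).trace = (Yᵀ * (U * X * V'ᵀ)).trace := by
    have : Uᵀ * Y * V' * Xᵀ = (Uᵀ * Y) * (V' * Xᵀ) := by
      simp [Matrix.mul_assoc]
    rw [this, Matrix.trace_mul_comm, ← Matrix.trace_transpose]
    congr 1
    simp [Matrix.transpose_mul, Matrix.mul_assoc]
  have h2 : (Yᵀ * (U * X * V'ᵀ)).trace + (Yᵀ * C).trace = (Yᵀ * (U * X * V'ᵀ + C)).trace := by
    rw [Matrix.mul_add, Matrix.trace_add]
  have h3 := trace_transpose_mul' Y (U * X * V'ᵀ + C)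
  simp only [mvrbmEnergy]
  linarith [h1, h2, h3]

lemma negEnergy_affine {I J K L : ℕ} (U : Matrix (Fin K) (Fin I) ℝ)
    (V : Matrix (Fin L) (Fin J) ℝ)
    (B : Matrix (Fin I) (Fin J) ℝ) (C : Matrix (Fin K) (Fin L) ℝ)
    (l₀ : Fin L) (j₀ : Fin J) (t : ℝ)
    (X : Matrix (Fin I) (Fin J) ℝ) (Y : Matrix (Fin K) (Fin L) ℝ) :
    -(mvrbmEnergy U (Matrix.of fun l j => if l = l₀ ∧ j = j₀ then t else V l j) B C X Y)
      = -(mvrbmEnergy U V B C X Y) + (t - V l₀ j₀) * ((Yᵀ * U * X) l₀ j₀) := by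
  set V' : Matrix (Fin L) (Fin J) ℝ :=
    Matrix.of fun l j => if l = l₀ ∧ j = j₀ then t else V l j with hV'
  rw [negEnergy_eq, negEnergy_eq]
  have hM : ∀ k l, (U * X * V'ᵀ + C) k l
      = (U * X * Vᵀ + C) k l + (if l = l₀ then (U * X) k j₀ * (t - V l₀ j₀) else 0) := by
    intro k l
    by_cases hl : l = l₀
    · simp only [Matrix.add_apply, Matrix.mul_apply, Matrix.transpose_apply, hV',
        Matrix.of_apply, hl, true_and, if_pos rfl]
      have : ∀ j, (∑ i, U k i * X i j) * (if j = j₀ then t else V l₀ j)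
          = (∑ i, U k i * X i j) * V l₀ j
            + (if j = j₀ then (∑ i, U k i * X i j₀) * (t - V l₀ j₀) else 0) := by
        intro j; by_cases hj : j = j₀ <;> simp [hj] <;> ring
      rw [Finset.sum_congr rfl fun j _ => this j, Finset.sum_add_distrib]
      simp only [Finset.sum_ite_eq', Finset.mem_univ, if_true]
      ring
    · simp only [Matrix.add_apply, Matrix.mul_apply, Matrix.transpose_apply, hV',
        Matrix.of_apply, hl, false_and, if_false, if_neg hl, add_zero]
  have hYUX : (Yᵀ * U * X) l₀ j₀ = ∑ k, Y k l₀ * (U * X) k j₀ := by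
    rw [Matrix.mul_assoc]
    simp [Matrix.mul_apply, Matrix.transpose_apply]
  have hrw : ∀ k, ∑ l, Y k l * (U * X * V'ᵀ + C) k l
      = (∑ l, Y k l * (U * X * Vᵀ + C) k l) + Y k l₀ * ((U * X) k j₀ * (t - V l₀ j₀)) := by
    intro k
    have : ∀ l, Y k l * (U * X * V'ᵀ + C) k l
        = Y k l * (U * X * Vᵀ + C) k l
          + (if l = l₀ then Y k l₀ * ((U * X) k j₀ * (t - V l₀ j₀)) else 0) := by
      intro l; rw [hM k l]
      by_cases hl : l = l₀ <;> simp [hl] <;> ring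
    rw [Finset.sum_congr rfl fun l _ => this l, Finset.sum_add_distrib]
    simp
  rw [Finset.sum_congr rfl fun k _ => hrw k, Finset.sum_add_distrib, hYUX, Finset.mul_sum, ← add_assoc]
  congr 1
  exact Finset.sum_congr rfl fun k _ => by ring

section Flip

variable {K L : ℕ} (M : Matrix (Fin K) (Fin L) ℝ) (k₀ : Fin K) (l₀ : Fin L)

/-- flip the bit at `(k₀, l₀)` -/
def flipB (k₀ : Fin K) (l₀ : Fin L) (Y : Matrix (Fin K) (Fin L) Bool) :
    Matrix (Fin K) (Fin L) Bool :=
  Matrix.of fun k l => if k = k₀ ∧ l = l₀ then !(Y k l) else Y k l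

lemma flipB_invol (Y : Matrix (Fin K) (Fin L) Bool) : flipB k₀ l₀ (flipB k₀ l₀ Y) = Y := by
  funext k l
  by_cases h : k = k₀ ∧ l = l₀ <;> simp [flipB, h]

def flipE (k₀ : Fin K) (l₀ : Fin L) :
    Equiv (Matrix (Fin K) (Fin L) Bool) (Matrix (Fin K) (Fin L) Bool) :=
  ⟨flipB k₀ l₀, flipB k₀ l₀, flipB_invol k₀ l₀, flipB_invol k₀ l₀⟩

lemma S_flip (Y : Matrix (Fin K) (Fin L) Bool) :
    ∑ k, ∑ l, toR (flipB k₀ l₀ Y) k l * M k l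
      = (∑ k, ∑ l, toR Y k l * M k l)
        + (if Y k₀ l₀ then -(M k₀ l₀) else M k₀ l₀) := by
  have hP : ∀ Z : Matrix (Fin K) (Fin L) Bool, ∑ k, ∑ l, toR Z k l * M k l
      = ∑ p : Fin K × Fin L, toR Z p.1 p.2 * M p.1 p.2 := by
    intro Z; rw [Fintype.sum_prod_type]
  have hsplit : ∀ Z : Matrix (Fin K) (Fin L) Bool,
      ∑ p : Fin K × Fin L, toR Z p.1 p.2 * M p.1 p.2
        = toR Z k₀ l₀ * M k₀ l₀
          + ∑ p : Fin K × Fin L, if p = (k₀, l₀) then 0 else toR Z p.1 p.2 * M p.1 p.2 :=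
    fun Z => sum_split_single (k₀, l₀) _
  have hR : ∑ p : Fin K × Fin L, (if p = (k₀, l₀) then 0 else toR (flipB k₀ l₀ Y) p.1 p.2 * M p.1 p.2)
      = ∑ p : Fin K × Fin L, if p = (k₀, l₀) then 0 else toR Y p.1 p.2 * M p.1 p.2 := by
    refine Finset.sum_congr rfl fun p _ => ?_
    by_cases hp : p = (k₀, l₀)
    · simp [hp]
    · have hp' : ¬(p.1 = k₀ ∧ p.2 = l₀) := by
        intro h; exact hp (Prod.ext h.1 h.2)
      simp [hp, toR, flipB, hp']
  rw [hP, hP, hsplit, hsplit, hR]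
  have h1 : toR (flipB k₀ l₀ Y) k₀ l₀ = if Y k₀ l₀ then (0:ℝ) else 1 := by
    by_cases h : Y k₀ l₀ <;> simp [toR, flipB, h]
  have h2 : toR Y k₀ l₀ = if Y k₀ l₀ then (1:ℝ) else 0 := rfl
  by_cases h : Y k₀ l₀ <;> simp [h1, h2, h] <;> ring

lemma flip_main :
    ∑ Y : Matrix (Fin K) (Fin L) Bool, toR Y k₀ l₀ * Real.exp (∑ k, ∑ l, toR Y k l * M k l)
      = sig (M k₀ l₀)
        * ∑ Y : Matrix (Fin K) (Fin L) Bool, Real.exp (∑ k, ∑ l, toR Y k l * M k l) := by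
  set m := M k₀ l₀ with hm
  set S : Matrix (Fin K) (Fin L) Bool → ℝ := fun Y => ∑ k, ∑ l, toR Y k l * M k l with hSdef
  have hpos : (0:ℝ) < 1 + Real.exp (-m) := by positivity
  have key : ∀ Y, toR Y k₀ l₀ * Real.exp (S Y)
      + toR (flipB k₀ l₀ Y) k₀ l₀ * Real.exp (S (flipB k₀ l₀ Y))
      = sig m * (Real.exp (S Y) + Real.exp (S (flipB k₀ l₀ Y))) := by
    intro Y
    have hS := S_flip M k₀ l₀ Y
    have h1 : toR (flipB k₀ l₀ Y) k₀ l₀ = if Y k₀ l₀ then (0:ℝ) else 1 := by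
      by_cases h : Y k₀ l₀ <;> simp [toR, flipB, h]
    have h2 : toR Y k₀ l₀ = if Y k₀ l₀ then (1:ℝ) else 0 := rfl
    by_cases h : Y k₀ l₀
    · have hSf : S (flipB k₀ l₀ Y) = S Y + -m := by rw [hSdef]; simp only; rw [hS]; simp [h, hm]
      rw [hSf, h1, h2]
      simp only [h, if_true]
      rw [Real.exp_add, sig]
      have := Real.exp_ne_zero (-m)
      field_simp
      ring
    · have hSf : S (flipB k₀ l₀ Y) = S Y + m := by rw [hSdef]; simp only; rw [hS]; simp [h, hm]
      rw [hSf, h1, h2]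
      simp only [h, if_false]
      rw [Real.exp_add, sig]
      have he : Real.exp (-m) * Real.exp m = 1 := by
        rw [← Real.exp_add]; simp
      field_simp
      simp only [Bool.false_eq_true, ↓reduceIte]
      nlinarith [Real.exp_pos (S Y), Real.exp_pos m, Real.exp_pos (-m)]
  have hcomp : ∀ f : Matrix (Fin K) (Fin L) Bool → ℝ,
      ∑ Y, f (flipB k₀ l₀ Y) = ∑ Y, f Y := fun f => Equiv.sum_comp (flipE k₀ l₀) f
  have hsum := Finset.sum_congr rfl fun Y (_ : Y ∈ Finset.univ) => key Y
  rw [Finset.sum_add_distrib] at hsum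
  rw [hcomp (fun Y => toR Y k₀ l₀ * Real.exp (S Y))] at hsum
  have hsum2 : ∑ Y, sig m * (Real.exp (S Y) + Real.exp (S (flipB k₀ l₀ Y)))
      = sig m * (∑ Y, Real.exp (S Y) + ∑ Y, Real.exp (S (flipB k₀ l₀ Y))) := by
    simp only [mul_add, Finset.sum_add_distrib, Finset.mul_sum]
  rw [hsum2, hcomp (fun Y => Real.exp (S Y))] at hsum
  linarith [hsum]

end Flip

lemma sum_c_mul_w {I J K L : ℕ} (U : Matrix (Fin K) (Fin I) ℝ) (V : Matrix (Fin L) (Fin J) ℝ)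
    (B : Matrix (Fin I) (Fin J) ℝ) (C : Matrix (Fin K) (Fin L) ℝ)
    (Xb : Matrix (Fin I) (Fin J) Bool) (l₀ : Fin L) (j₀ : Fin J) :
    ∑ Y : Matrix (Fin K) (Fin L) Bool,
        ((toR Y)ᵀ * U * toR Xb) l₀ j₀ * Real.exp (-(mvrbmEnergy U V B C (toR Xb) (toR Y)))
      = ((sigM (U * toR Xb * Vᵀ + C))ᵀ * U * toR Xb) l₀ j₀
        * ∑ Y : Matrix (Fin K) (Fin L) Bool,
            Real.exp (-(mvrbmEnergy U V B C (toR Xb) (toR Y))) := by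
  set M : Matrix (Fin K) (Fin L) ℝ := U * toR Xb * Vᵀ + C with hM
  set c₀ : ℝ := Real.exp (((toR Xb)ᵀ * B).trace) with hc₀
  set S : Matrix (Fin K) (Fin L) Bool → ℝ := fun Y => ∑ k, ∑ l, toR Y k l * M k l with hSdef
  have hw : ∀ Y : Matrix (Fin K) (Fin L) Bool,
      Real.exp (-(mvrbmEnergy U V B C (toR Xb) (toR Y))) = c₀ * Real.exp (S Y) := by
    intro Y
    rw [negEnergy_eq, Real.exp_add]
  have hc : ∀ Y : Matrix (Fin K) (Fin L) Bool,
      ((toR Y)ᵀ * U * toR Xb) l₀ j₀ = ∑ k, toR Y k l₀ * (U * toR Xb) k j₀ := by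
    intro Y
    rw [Matrix.mul_assoc]
    simp [Matrix.mul_apply, Matrix.transpose_apply]
  have hsig : ((sigM M)ᵀ * U * toR Xb) l₀ j₀ = ∑ k, sig (M k l₀) * (U * toR Xb) k j₀ := by
    rw [Matrix.mul_assoc]
    simp [Matrix.mul_apply, Matrix.transpose_apply, sigM]
  calc
    ∑ Y : Matrix (Fin K) (Fin L) Bool,
        ((toR Y)ᵀ * U * toR Xb) l₀ j₀ * Real.exp (-(mvrbmEnergy U V B C (toR Xb) (toR Y)))
      = ∑ Y : Matrix (Fin K) (Fin L) Bool, ∑ k,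
          (toR Y k l₀ * (U * toR Xb) k j₀) * (c₀ * Real.exp (S Y)) := by
        refine Finset.sum_congr rfl fun Y _ => ?_
        rw [hw, hc, Finset.sum_mul]
    _ = ∑ k, ∑ Y : Matrix (Fin K) (Fin L) Bool,
          (toR Y k l₀ * (U * toR Xb) k j₀) * (c₀ * Real.exp (S Y)) := Finset.sum_comm
    _ = ∑ k, ((U * toR Xb) k j₀ * c₀) * ∑ Y : Matrix (Fin K) (Fin L) Bool,
          toR Y k l₀ * Real.exp (S Y) := by
        refine Finset.sum_congr rfl fun k _ => ?_
        rw [Finset.mul_sum]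
        exact Finset.sum_congr rfl fun Y _ => by ring
    _ = ∑ k, ((U * toR Xb) k j₀ * c₀)
          * (sig (M k l₀) * ∑ Y : Matrix (Fin K) (Fin L) Bool, Real.exp (S Y)) := by
        refine Finset.sum_congr rfl fun k _ => ?_
        rw [flip_main M k l₀]
    _ = (∑ k, sig (M k l₀) * (U * toR Xb) k j₀)
          * ∑ Y : Matrix (Fin K) (Fin L) Bool, c₀ * Real.exp (S Y) := by
        rw [Finset.sum_mul, ← Finset.mul_sum]
        exact Finset.sum_congr rfl fun k _ => by ring
    _ = ((sigM M)ᵀ * U * toR Xb) l₀ j₀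
          * ∑ Y : Matrix (Fin K) (Fin L) Bool,
              Real.exp (-(mvrbmEnergy U V B C (toR Xb) (toR Y))) := by
        rw [hsig]
        congr 1
        exact (Finset.sum_congr rfl fun Y _ => (hw Y).symm)

theorem mvrbm_loglik_derivative_V {I J K L N : ℕ}
    (hI : 0 < I) (hJ : 0 < J) (hK : 0 < K) (hL : 0 < L) (hN : 0 < N)
    (U : Matrix (Fin K) (Fin I) ℝ) (V : Matrix (Fin L) (Fin J) ℝ)
    (B : Matrix (Fin I) (Fin J) ℝ) (C : Matrix (Fin K) (Fin L) ℝ)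
    (Xs : Fin N → Matrix (Fin I) (Fin J) Bool) (l₀ : Fin L) (j₀ : Fin J)
    -- `Vv t` is `V` with the single entry `v_{l₀j₀}` replaced by `t`
    (Vv : ℝ → Matrix (Fin L) (Fin J) ℝ)
    (hVv : ∀ t, Vv t = Matrix.of fun l j => if l = l₀ ∧ j = j₀ then t else V l j)
    -- the marginal distribution `p(X)` of the visible matrix
    (p : Matrix (Fin I) (Fin J) Bool → ℝ)
    (hp : ∀ X, p X =
      (∑ Y : Matrix (Fin K) (Fin L) Bool,
          Real.exp (-(mvrbmEnergy U V B C (toR X) (toR Y)))) /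
        ∑ X' : Matrix (Fin I) (Fin J) Bool, ∑ Y' : Matrix (Fin K) (Fin L) Bool,
          Real.exp (-(mvrbmEnergy U V B C (toR X') (toR Y')))) :
    deriv (fun t : ℝ =>
        (1 / (N : ℝ)) * ∑ n : Fin N,
            Real.log (∑ Y : Matrix (Fin K) (Fin L) Bool,
              Real.exp (-(mvrbmEnergy U (Vv t) B C (toR (Xs n)) (toR Y))))
          - Real.log (∑ X' : Matrix (Fin I) (Fin J) Bool,
              ∑ Y' : Matrix (Fin K) (Fin L) Bool,
                Real.exp (-(mvrbmEnergy U (Vv t) B C (toR X') (toR Y'))))) (V l₀ j₀)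
      = (1 / (N : ℝ)) * ∑ n : Fin N,
            ((sigM (U * toR (Xs n) * Vᵀ + C))ᵀ * U * toR (Xs n)) l₀ j₀
        - ∑ X : Matrix (Fin I) (Fin J) Bool,
            p X * ((sigM (U * toR X * Vᵀ + C))ᵀ * U * toR X) l₀ j₀ := by
  have hYne : Nonempty (Matrix (Fin K) (Fin L) Bool) := ⟨Matrix.of fun _ _ => false⟩
  have hXne : Nonempty (Matrix (Fin I) (Fin J) Bool) := ⟨Matrix.of fun _ _ => false⟩
  set t₀ : ℝ := V l₀ j₀ with ht₀
  -- the per-X partition function at the base point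
  set G : Matrix (Fin I) (Fin J) Bool → ℝ := fun Xb =>
    ∑ Y : Matrix (Fin K) (Fin L) Bool,
      Real.exp (-(mvrbmEnergy U V B C (toR Xb) (toR Y))) with hG
  set d : Matrix (Fin I) (Fin J) Bool → ℝ := fun Xb =>
    ∑ Y : Matrix (Fin K) (Fin L) Bool,
      ((toR Y)ᵀ * U * toR Xb) l₀ j₀
        * Real.exp (-(mvrbmEnergy U V B C (toR Xb) (toR Y))) with hd
  set s : Matrix (Fin I) (Fin J) Bool → ℝ := fun Xb =>
    ((sigM (U * toR Xb * Vᵀ + C))ᵀ * U * toR Xb) l₀ j₀ with hs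
  have hGpos : ∀ Xb, 0 < G Xb := fun Xb =>
    Finset.sum_pos (fun _ _ => Real.exp_pos _) Finset.univ_nonempty
  have hZpos : 0 < ∑ X' : Matrix (Fin I) (Fin J) Bool, G X' :=
    Finset.sum_pos (fun X' _ => hGpos X') Finset.univ_nonempty
  have hds : ∀ Xb, d Xb = s Xb * G Xb := fun Xb => sum_c_mul_w U V B C Xb l₀ j₀
  -- derivative of each exponential term
  have hterm : ∀ (Xb : Matrix (Fin I) (Fin J) Bool) (Y : Matrix (Fin K) (Fin L) Bool),
      HasDerivAt (fun t => Real.exp (-(mvrbmEnergy U (Vv t) B C (toR Xb) (toR Y))))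
        (((toR Y)ᵀ * U * toR Xb) l₀ j₀
          * Real.exp (-(mvrbmEnergy U V B C (toR Xb) (toR Y)))) t₀ := by
    intro Xb Y
    set a : ℝ := -(mvrbmEnergy U V B C (toR Xb) (toR Y)) with ha
    set c : ℝ := ((toR Y)ᵀ * U * toR Xb) l₀ j₀ with hc
    have hfun : (fun t => Real.exp (-(mvrbmEnergy U (Vv t) B C (toR Xb) (toR Y))))
        = fun t => Real.exp (a + (t - t₀) * c) := by
      funext t
      rw [hVv t, negEnergy_affine U V B C l₀ j₀ t (toR Xb) (toR Y)]
    rw [hfun]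
    have h1 : HasDerivAt (fun t : ℝ => a + (t - t₀) * c) c t₀ := by
      have := (((hasDerivAt_id t₀).sub_const t₀).mul_const c).const_add a
      simpa using this
    have h2 := h1.exp
    simp only [sub_self, zero_mul, add_zero] at h2
    simpa [mul_comm] using h2
  have hg : ∀ Xb : Matrix (Fin I) (Fin J) Bool,
      HasDerivAt (fun t => ∑ Y : Matrix (Fin K) (Fin L) Bool,
        Real.exp (-(mvrbmEnergy U (Vv t) B C (toR Xb) (toR Y)))) (d Xb) t₀ :=
    fun Xb => HasDerivAt.fun_sum (fun Y _ => hterm Xb Y)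
  have hgval : ∀ Xb : Matrix (Fin I) (Fin J) Bool,
      (∑ Y : Matrix (Fin K) (Fin L) Bool,
        Real.exp (-(mvrbmEnergy U (Vv t₀) B C (toR Xb) (toR Y)))) = G Xb := by
    intro Xb
    have hVt : Vv t₀ = V := by
      rw [hVv]
      funext l j
      by_cases h : l = l₀ ∧ j = j₀
      · simp [h.1, h.2, Matrix.of_apply, ht₀]
      · simp [Matrix.of_apply, h]
    rw [hVt, hG]
  -- log-derivatives of data terms
  have hlogn : ∀ n : Fin N,
      HasDerivAt (fun t => Real.log (∑ Y : Matrix (Fin K) (Fin L) Bool,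
        Real.exp (-(mvrbmEnergy U (Vv t) B C (toR (Xs n)) (toR Y))))) (s (Xs n)) t₀ := by
    intro n
    have h := (hg (Xs n)).log (by rw [hgval]; exact ne_of_gt (hGpos (Xs n)))
    rw [hgval, hds] at h
    have : s (Xs n) * G (Xs n) / G (Xs n) = s (Xs n) :=
      mul_div_cancel_right₀ _ (ne_of_gt (hGpos (Xs n)))
    rwa [this] at h
  have hsumn : HasDerivAt (fun t => ∑ n : Fin N,
      Real.log (∑ Y : Matrix (Fin K) (Fin L) Bool,
        Real.exp (-(mvrbmEnergy U (Vv t) B C (toR (Xs n)) (toR Y)))))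
      (∑ n : Fin N, s (Xs n)) t₀ :=
    HasDerivAt.fun_sum (fun n _ => hlogn n)
  -- log-derivative of the joint partition function
  have hZ : HasDerivAt (fun t => ∑ X' : Matrix (Fin I) (Fin J) Bool,
      ∑ Y' : Matrix (Fin K) (Fin L) Bool,
        Real.exp (-(mvrbmEnergy U (Vv t) B C (toR X') (toR Y'))))
      (∑ X' : Matrix (Fin I) (Fin J) Bool, d X') t₀ :=
    HasDerivAt.fun_sum (fun X' _ => hg X')
  have hZval : (∑ X' : Matrix (Fin I) (Fin J) Bool,
      ∑ Y' : Matrix (Fin K) (Fin L) Bool,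
        Real.exp (-(mvrbmEnergy U (Vv t₀) B C (toR X') (toR Y'))))
      = ∑ X' : Matrix (Fin I) (Fin J) Bool, G X' :=
    Finset.sum_congr rfl fun X' _ => hgval X'
  have hlogZ : HasDerivAt (fun t => Real.log (∑ X' : Matrix (Fin I) (Fin J) Bool,
      ∑ Y' : Matrix (Fin K) (Fin L) Bool,
        Real.exp (-(mvrbmEnergy U (Vv t) B C (toR X') (toR Y')))))
      ((∑ X' : Matrix (Fin I) (Fin J) Bool, d X')
        / ∑ X' : Matrix (Fin I) (Fin J) Bool, G X') t₀ := by
    have h := hZ.log (by rw [hZval]; exact ne_of_gt hZpos)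
    rwa [hZval] at h
  have htotal := ((hsumn.const_mul ((1 : ℝ) / N)).fun_sub hlogZ)
  have hD := htotal.deriv
  rw [hD]
  congr 1
  rw [Finset.sum_div]
  refine Finset.sum_congr rfl fun Xb _ => ?_
  rw [hds Xb, hp Xb]
  have : (∑ X' : Matrix (Fin I) (Fin J) Bool, ∑ Y' : Matrix (Fin K) (Fin L) Bool,
      Real.exp (-(mvrbmEnergy U V B C (toR X') (toR Y'))))
      = ∑ X' : Matrix (Fin I) (Fin J) Bool, G X' := rfl
  rw [this]
  rw [hG]
  ring
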